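/- arXiv:2302.07029 — 5 statements merged into one kernel-verified Lean document; each statement's English description precedes it below -/
import Mathlib

section
/- Let G be a finite abelian group and R ⊆ G such that R ≠ R + H for every non-trivial subgroup H of G (where R + H = {r + h : r ∈ R, h ∈ H}). Then for any subsets X, Y ⊆ G with |X| = |G| - |R| and |Y| ≥ 2, we have (X + Y) ∩ R ≠ ∅. -/
open Pointwise

/-- If `R ⊆ G` is not invariant under translation by any non-trivial subgroup, then for any
`X, Y ⊆ G` with `|X| = |G| - |R|` and `|Y| ≥ 2`, the sumset `X + Y` meets `R`. -/
theorem sumset_inter_target_nonempty {G : Type*} [AddCommGroup G] [Fintype G] [DecidableEq G]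
    (R X Y : Finset G)
    (hR : ∀ H : AddSubgroup G, H ≠ ⊥ → (R : Set G) + (H : Set G) ≠ (R : Set G))
    (hX : X.card = Fintype.card G - R.card) (hY : 2 ≤ Y.card) :
    ((X + Y) ∩ R).Nonempty := by
  by_contra hc
  rw [Finset.not_nonempty_iff_eq_empty] at hc
  have hdisj : ∀ a, a ∈ X + Y → a ∉ R := by
    intro a ha hr
    have : a ∈ (X + Y) ∩ R := Finset.mem_inter.mpr ⟨ha, hr⟩
    simp [hc] at this
  have hcard2 : 2 ≤ Fintype.card G := le_trans hY (Finset.card_le_univ Y)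
  have : Nontrivial G := Fintype.one_lt_card_iff_nontrivial.mp hcard2
  by_cases hRu : R = Finset.univ
  · obtain ⟨g, hg⟩ := exists_ne (0 : G)
    refine hR ⊤ ?_ ?_
    · intro h
      have : g ∈ (⊥ : AddSubgroup G) := h ▸ AddSubgroup.mem_top g
      exact hg (AddSubgroup.mem_bot.mp this)
    · have hne : ((R : Set G)).Nonempty := by
        subst hRu; simp [Set.univ_nonempty]
      rw [AddSubgroup.coe_top, Set.add_univ hne]
      subst hRu; simp
  · have hRlt : R.card < Fintype.card G := by
      have := Finset.card_le_univ R
      rcases lt_or_eq_of_le this with h | h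
      · simpa using h
      · exact absurd ((Finset.card_eq_iff_eq_univ R).mp (by simpa using h)) hRu
    have key : ∀ y ∈ Y, X + {y} = Rᶜ := by
      intro y hy
      apply Finset.eq_of_subset_of_card_le
      · intro a ha
        rw [Finset.mem_compl]
        exact hdisj a (Finset.add_subset_add_left (Finset.singleton_subset_iff.mpr hy) ha)
      · simp [Finset.card_compl, hX, Finset.add_singleton,
          Finset.card_image_of_injective _ (add_left_injective y)]
    obtain ⟨y₁, hy₁, y₂, hy₂, hne⟩ := Finset.one_lt_card.mp hY
    have hd : y₂ - y₁ ≠ 0 := sub_ne_zero.mpr (Ne.symm hne)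
    have hmem : ∀ (y : G), y ∈ Y → ∀ a : G, a ∉ R ↔ ∃ x ∈ X, x + y = a := by
      intro y hy a
      rw [← Finset.mem_compl, ← key y hy]
      simp [Finset.mem_add]
    have key2 : ∀ a : G, a ∈ R ↔ a + (y₂ - y₁) ∈ R := by
      intro a
      rw [← not_iff_not, hmem y₁ hy₁ a, hmem y₂ hy₂ (a + (y₂ - y₁))]
      constructor
      · rintro ⟨x, hx, hxa⟩
        exact ⟨x, hx, by rw [← hxa]; abel⟩
      · rintro ⟨x, hx, hxa⟩
        refine ⟨x, hx, ?_⟩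
        have : x + y₂ - (y₂ - y₁) = a + (y₂ - y₁) - (y₂ - y₁) := by rw [hxa]
        rw [add_sub_cancel_right] at this
        rw [← this]; abel
    have key3 : ∀ (n : ℤ) (a : G), a ∈ R ↔ a + n • (y₂ - y₁) ∈ R := by
      intro n
      induction n using Int.induction_on with
      | zero => simp
      | succ n ih =>
        intro a
        have h1 : a + ((n : ℤ) + 1) • (y₂ - y₁) = (a + (n : ℤ) • (y₂ - y₁)) + (y₂ - y₁) := by
          rw [add_smul, one_smul, add_assoc]
        rw [h1, ← key2, ih]
      | pred n ih =>
        intro a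
        have h1 : a + (-(n : ℤ) - 1) • (y₂ - y₁) + (y₂ - y₁) = a + (-(n : ℤ)) • (y₂ - y₁) := by
          rw [sub_smul, one_smul]; abel
        rw [ih a, ← h1, ← key2]
    refine hR (AddSubgroup.zmultiples (y₂ - y₁)) ?_ ?_
    · intro h
      have : y₂ - y₁ ∈ (⊥ : AddSubgroup G) := h ▸ AddSubgroup.mem_zmultiples _
      exact hd (AddSubgroup.mem_bot.mp this)
    · apply Set.Subset.antisymm
      · rintro a ⟨r, hr, h, hh, rfl⟩
        obtain ⟨n, rfl⟩ := AddSubgroup.mem_zmultiples_iff.mp hh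
        exact (key3 n r).mp hr
      · intro a ha
        exact ⟨a, ha, 0, AddSubgroup.zero_mem _, add_zero a⟩
end

section
/- Let G be a finite abelian group, 𝓛 ⊆ 2^N a lattice on a finite set N represented by a directed acyclic graph H on vertex set N (X ∈ 𝓛 iff no arc of H enters X), γ : N → G, and r ∈ G. For X ∈ 𝓛 define C_X = {x ∈ X : every arc of H leaving x leaves X}. If the group-constrained lattice feasibility problem is feasible (some X ∈ 𝓛 has γ(X) = r), then there is a feasible X with |C_X| < |G|. -/
/-- Pigeonhole: any finset with at least `|G|` elements contains a nonempty
zero-sum subset. -/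
lemma zero_sum_subset {N : Type*} [DecidableEq N] {G : Type*} [AddCommGroup G]
    [Fintype G] (γ : N → G) (S : Finset N) (h : Fintype.card G ≤ S.card) :
    ∃ T ⊆ S, T.Nonempty ∧ ∑ x ∈ T, γ x = 0 := by
  classical
  set l := S.toList with hl
  have hlen : l.length = S.card := S.length_toList
  have hnd : l.Nodup := S.nodup_toList
  -- prefix sums
  set f : ℕ → G := fun i => ((l.take i).map γ).sum with hf
  have hpigeon : ∃ i ∈ Finset.range (S.card + 1), ∃ j ∈ Finset.range (S.card + 1),
      i ≠ j ∧ f i = f j := by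
    have hcard : Fintype.card G < (Finset.range (S.card + 1)).card := by
      simpa using Nat.lt_succ_of_le h
    have := Finset.exists_ne_map_eq_of_card_lt_of_maps_to hcard
      (f := f) (t := Finset.univ) (fun i _ => Finset.mem_univ _)
    obtain ⟨i, hi, j, hj, hij, hfij⟩ := this
    exact ⟨i, hi, j, hj, hij, hfij⟩
  obtain ⟨i, hi, j, hj, hij, hfij⟩ := hpigeon
  -- wlog i < j
  wlog hlt : i < j generalizing i j
  · exact this j hj i hi hij.symm hfij.symm (by omega)
  have hjle : j ≤ l.length := by
    rw [hlen]; exact Nat.lt_succ_iff.mp (Finset.mem_range.mp hj)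
  set seg := (l.drop i).take (j - i) with hseg
  have hsub : seg.Sublist l := ((l.drop i).take_sublist _).trans (l.drop_sublist i)
  have hsegnd : seg.Nodup := hsub.nodup hnd
  have hseglen : seg.length = j - i := by
    rw [hseg, List.length_take, List.length_drop]
    omega
  refine ⟨seg.toFinset, ?_, ?_, ?_⟩
  · intro x hx
    rw [List.mem_toFinset] at hx
    have := hsub.mem hx
    rwa [hl, Finset.mem_toList] at this
  · have : seg ≠ [] := by
      intro hnil
      rw [hnil] at hseglen
      simp at hseglen
      omega
    obtain ⟨a, ha⟩ := List.exists_mem_of_ne_nil seg this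
    exact ⟨a, List.mem_toFinset.mpr ha⟩
  · have hsum : ∑ x ∈ seg.toFinset, γ x = (seg.map γ).sum := by
      rw [List.sum_toFinset _ hsegnd]
    rw [hsum]
    have htake : l.take j = l.take i ++ seg := by
      have : j = i + (j - i) := by omega
      rw [this, List.take_add]
    have : f j = f i + (seg.map γ).sum := by
      rw [hf]
      simp only [htake, List.map_append, List.sum_append]
    rw [this] at hfij
    exact (add_eq_left).mp hfij.symm

/-- For a lattice represented by a DAG `(N, A)` (where `X ∈ 𝓛` iff no arc enters `X`):
if some `X ∈ 𝓛` has `γ(X) = r`, then there is such an `X` whose set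
`C_X = {x ∈ X : all out-arcs of x leave X}` satisfies `|C_X| < |G|`. -/
theorem gclf_feasible_with_small_core {N : Type*} [Fintype N] [DecidableEq N]
    {G : Type*} [AddCommGroup G] [Fintype G]
    (A : N → N → Prop) [DecidableRel A]
    (hacyclic : ∀ x, ¬ Relation.TransGen A x x)
    (γ : N → G) (r : G)
    (hfeas : ∃ X : Finset N, (∀ u v, A u v → v ∈ X → u ∈ X) ∧ ∑ x ∈ X, γ x = r) :
    ∃ X : Finset N, (∀ u v, A u v → v ∈ X → u ∈ X) ∧ ∑ x ∈ X, γ x = r ∧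
      (X.filter fun x => ∀ y, A x y → y ∉ X).card < Fintype.card G := by
  classical
  obtain ⟨X, hX⟩ := hfeas
  suffices H : ∀ n (X : Finset N), X.card = n →
      ((∀ u v, A u v → v ∈ X → u ∈ X) ∧ ∑ x ∈ X, γ x = r) →
      ∃ X : Finset N, (∀ u v, A u v → v ∈ X → u ∈ X) ∧ ∑ x ∈ X, γ x = r ∧
        (X.filter fun x => ∀ y, A x y → y ∉ X).card < Fintype.card G from
    H X.card X rfl hX
  intro n
  induction n using Nat.strong_induction_on with
  | _ n ih =>
  intro X hn hX
  obtain ⟨hclosed, hsum⟩ := hX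
  by_cases hsmall : (X.filter fun x => ∀ y, A x y → y ∉ X).card < Fintype.card G
  · exact ⟨X, hclosed, hsum, hsmall⟩
  · push_neg at hsmall
    obtain ⟨T, hTsub, hTne, hTzero⟩ := zero_sum_subset γ _ hsmall
    have hTsubX : T ⊆ X := hTsub.trans (Finset.filter_subset _ _)
    have hclosed' : ∀ u v, A u v → v ∈ X \ T → u ∈ X \ T := by
      intro u v huv hv
      rw [Finset.mem_sdiff] at hv ⊢
      refine ⟨hclosed u v huv hv.1, fun hu => ?_⟩
      have := hTsub hu
      rw [Finset.mem_filter] at this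
      exact this.2 v huv hv.1
    have hsum' : ∑ x ∈ X \ T, γ x = r := by
      rw [Finset.sum_sdiff_eq_sub hTsubX, hTzero, sub_zero, hsum]
    have hcard : (X \ T).card < X.card := by
      have := Finset.card_sdiff_of_subset hTsubX
      have := Finset.card_pos.mpr hTne
      have := Finset.card_le_card hTsubX
      omega
    exact ih _ (hn ▸ hcard) _ rfl ⟨hclosed', hsum'⟩
end

section
/- Let G be a finite abelian group, R ⊆ G, and X, Y ⊆ G non-empty finite subsets. If (X + Y) ∩ R = ∅ and |X| = |G| - |R|, then X + b₁ = X + b₂ for any b₁, b₂ ∈ Y; in particular if Y contains two distinct elements b₁ ≠ b₂ with h = b₁ - b₂, then X = X + ⟨h⟩ and R = R + ⟨h⟩, where ⟨h⟩ is the subgroup generated by h. -/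
open Pointwise

private lemma zsmul_image_eq {G : Type*} [AddCommGroup G] [DecidableEq G] (S : Finset G) (c : G)
    (hc : S.image (· + c) = S) : ∀ n : ℤ, S.image (· + n • c) = S := by
  have hneg : S.image (· + (-c)) = S := by
    conv_lhs => rw [← hc]
    rw [Finset.image_image]
    simp [Function.comp]
  intro n
  induction n using Int.induction_on with
  | zero => simp
  | succ k ih =>
    have he : ((k : ℤ) + 1) • c = (k : ℤ) • c + c := by rw [add_zsmul, one_zsmul]
    rw [he]
    calc S.image (· + ((k : ℤ) • c + c)) = (S.image (· + (k : ℤ) • c)).image (· + c) := by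
          rw [Finset.image_image]; congr 1; ext x; simp [add_assoc]
      _ = S := by rw [ih, hc]
  | pred k ih =>
    have he : (-(k : ℤ) - 1) • c = (-(k : ℤ)) • c + (-c) := by
      rw [sub_zsmul, one_zsmul]
    rw [he]
    calc S.image (· + ((-(k : ℤ)) • c + -c)) = (S.image (· + (-(k : ℤ)) • c)).image (· + (-c)) := by
          rw [Finset.image_image]; congr 1; ext x; simp [add_assoc]
      _ = S := by rw [ih, hneg]

private lemma coset_invariance {G : Type*} [AddCommGroup G] [DecidableEq G] (S : Finset G) (c : G)
    (hc : S.image (· + c) = S) :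
    (S : Set G) + ((AddSubgroup.zmultiples c : AddSubgroup G) : Set G) = S := by
  have key := zsmul_image_eq S c hc
  ext g
  constructor
  · rintro ⟨x, hx, y, hy, rfl⟩
    obtain ⟨n, rfl⟩ := AddSubgroup.mem_zmultiples_iff.mp hy
    have hmem : x + n • c ∈ S.image (· + n • c) := Finset.mem_image_of_mem _ hx
    rw [key n] at hmem
    exact hmem
  · intro hg
    exact ⟨g, hg, 0, AddSubgroup.zero_mem _, add_zero g⟩

/-- If `(X + Y) ∩ R = ∅` and `|X| = |G| - |R|`, then all translates `X + b`, `b ∈ Y`,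
coincide; in particular, for distinct `b₁, b₂ ∈ Y` with `h = b₁ - b₂`, both `X` and `R`
are invariant under adding the subgroup `⟨h⟩`. -/
theorem translates_eq_and_coset_invariance {G : Type*} [AddCommGroup G] [Fintype G]
    [DecidableEq G] (R X Y : Finset G) (hX : X.Nonempty) (hY : Y.Nonempty)
    (hdisj : (X + Y) ∩ R = ∅) (hcard : X.card = Fintype.card G - R.card) :
    (∀ b₁ ∈ Y, ∀ b₂ ∈ Y, X + ({b₁} : Finset G) = X + ({b₂} : Finset G)) ∧
    (∀ b₁ ∈ Y, ∀ b₂ ∈ Y, b₁ ≠ b₂ →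
      (X : Set G) + ((AddSubgroup.zmultiples (b₁ - b₂) : AddSubgroup G) : Set G) = X ∧
      (R : Set G) + ((AddSubgroup.zmultiples (b₁ - b₂) : AddSubgroup G) : Set G) = R) := by
  have hsub : X + Y ⊆ Rᶜ := by
    intro g hg
    rw [Finset.mem_compl]
    intro hr
    have : g ∈ (X + Y) ∩ R := Finset.mem_inter.mpr ⟨hg, hr⟩
    rw [hdisj] at this
    exact absurd this (Finset.notMem_empty g)
  have hcardXY : (X + Y).card ≤ X.card := by
    calc (X + Y).card ≤ Rᶜ.card := Finset.card_le_card hsub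
      _ = Fintype.card G - R.card := Finset.card_compl R
      _ = X.card := hcard.symm
  have addsing : ∀ (S : Finset G) (a : G), S + ({a} : Finset G) = S.image (· + a) := by
    intro S a
    ext x
    simp only [Finset.mem_add, Finset.mem_image, Finset.mem_singleton]
    constructor
    · rintro ⟨y, hy, z, rfl, rfl⟩
      exact ⟨y, hy, rfl⟩
    · rintro ⟨y, hy, rfl⟩
      exact ⟨y, hy, a, rfl, rfl⟩
  have hcardXb : ∀ b : G, (X + ({b} : Finset G)).card = X.card := by
    intro b
    rw [addsing]
    exact Finset.card_image_of_injective _ (add_left_injective b)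
  have hTb : ∀ b ∈ Y, X + ({b} : Finset G) = X + Y := by
    intro b hb
    apply Finset.eq_of_subset_of_card_le
    · exact Finset.add_subset_add_left (Finset.singleton_subset_iff.mpr hb)
    · rw [hcardXb b]; exact hcardXY
  constructor
  · intro b₁ hb₁ b₂ hb₂
    rw [hTb b₁ hb₁, hTb b₂ hb₂]
  · intro b₁ hb₁ b₂ hb₂ _
    have h1 : X.image (· + b₁) = X.image (· + b₂) := by
      rw [← addsing, ← addsing]
      exact (hTb b₁ hb₁).trans (hTb b₂ hb₂).symm
    have hc : X.image (· + (b₁ - b₂)) = X := by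
      have h2 := congrArg (Finset.image (· + (-b₂))) h1
      rw [Finset.image_image, Finset.image_image] at h2
      calc X.image (· + (b₁ - b₂)) = X.image ((· + (-b₂)) ∘ (· + b₁)) := by
            congr 1; ext x; simp [Function.comp, add_assoc, sub_eq_add_neg]
        _ = X.image ((· + (-b₂)) ∘ (· + b₂)) := h2
        _ = X := by
            rw [show ((· + (-b₂)) ∘ (· + b₂) : G → G) = id by ext x; simp]
            exact Finset.image_id
    refine ⟨coset_invariance X (b₁ - b₂) hc, ?_⟩
    -- R is the complement of X + Y
    have hXY : X + Y = Rᶜ := by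
      apply Finset.eq_of_subset_of_card_le hsub
      apply le_of_eq
      rw [← hTb b₁ hb₁, hcardXb b₁, hcard, Finset.card_compl]
    have hXYinv : (X + Y).image (· + (b₁ - b₂)) = X + Y := by
      rw [← hTb b₁ hb₁, addsing, Finset.image_image]
      calc X.image ((· + (b₁ - b₂)) ∘ (· + b₁)) = (X.image (· + (b₁ - b₂))).image (· + b₁) := by
            rw [Finset.image_image]; congr 1; ext x
            simp [Function.comp, add_assoc, add_comm]
        _ = X.image (· + b₁) := by rw [hc]
    have hRc : R = (X + Y)ᶜ := by rw [hXY, compl_compl]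
    have hRinv : R.image (· + (b₁ - b₂)) = R := by
      apply Finset.eq_of_subset_of_card_le
      · intro g hg
        obtain ⟨r, hr, rfl⟩ := Finset.mem_image.mp hg
        rw [hRc, Finset.mem_compl]
        intro hmem
        rw [← hXYinv] at hmem
        obtain ⟨s, hs, hseq⟩ := Finset.mem_image.mp hmem
        have : s = r := by
          have := add_right_cancel hseq
          exact this
        rw [this] at hs
        rw [hRc, Finset.mem_compl] at hr
        exact hr hs
      · exact le_of_eq (Finset.card_image_of_injective _ (add_left_injective _)).symm
    exact coset_invariance R (b₁ - b₂) hRinv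
end

section
/- Define f : ℕ × ℕ → ℝ by suitable recursion bounds: suppose f(n, 0) = 0 for all n ≥ 1, f(n, d) = 1 for n ≤ 3 and d > 0, and for n ≥ 4, d ∈ {1,2,3}, there exists p with 2 ≤ p ≤ ⌊n/2⌋ such that f(n,d) ≤ (d+1)³ f(p,d) + d(d+1)² f(n-p, d-1) + f(n-p+1, d). Then f(n,d) ≤ (d+1)^{3d} · n^{d + 3·log₂(d+1) + 2} for all n ≥ 1 and d ∈ {0,1,2,3}. -/
open Real in
private lemma key1 {c x D : ℝ} (hc : 1 ≤ c) (hx : 0 < x) (hx2 : x ≤ 1/2) (hD : 0 ≤ D) :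
    c ^ 3 * x ^ (D + 3 * Real.logb 2 c + 2) ≤ x ^ 2 := by
  have hc0 : (0:ℝ) < c := lt_of_lt_of_le one_pos hc
  set L := Real.logb 2 c with hLdef
  have hL : 0 ≤ L := Real.logb_nonneg one_lt_two hc
  have h2L : (2:ℝ) ^ L = c := Real.rpow_logb two_pos (by norm_num) hc0
  have hhalf : ((1:ℝ)/2) ^ (3*L) = (c^3)⁻¹ := by
    rw [show (1:ℝ)/2 = 2⁻¹ by norm_num, Real.inv_rpow (by norm_num),
      show (3:ℝ)*L = L*3 by ring, Real.rpow_mul (by norm_num), h2L,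
      show (3:ℝ) = ((3:ℕ):ℝ) by norm_num, Real.rpow_natCast]
  have step : x ^ (D + 3*L) ≤ (c^3)⁻¹ :=
    calc x ^ (D + 3*L) ≤ ((1:ℝ)/2) ^ (D + 3*L) :=
          Real.rpow_le_rpow hx.le hx2 (by positivity)
    _ ≤ ((1:ℝ)/2) ^ (3*L) :=
          Real.rpow_le_rpow_of_exponent_ge (by norm_num) (by norm_num) (by linarith)
    _ = (c^3)⁻¹ := hhalf
  have hsplit : x ^ (D + 3*L + 2) = x ^ (D + 3*L) * x ^ 2 := by
    rw [Real.rpow_add hx, show (2:ℝ) = ((2:ℕ):ℝ) by norm_num, Real.rpow_natCast]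
  calc c^3 * x ^ (D + 3*L + 2) = c^3 * x ^ (D + 3*L) * x^2 := by rw [hsplit]; ring
  _ ≤ c^3 * (c^3)⁻¹ * x^2 := by
      have hxe : 0 ≤ x ^ (D + 3*L) := Real.rpow_nonneg hx.le _
      have := mul_le_mul_of_nonneg_left step (le_of_lt (by positivity : (0:ℝ) < c^3))
      nlinarith [sq_nonneg x]
  _ = x^2 := by rw [mul_inv_cancel₀ (by positivity), one_mul]

private lemma sum_sq_lemma {P Q : ℝ} (hP : 2 ≤ P) (hQ : 2 ≤ Q) :
    P^2 + Q + (Q+1)^2 ≤ (P+Q)^2 := by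
  nlinarith [mul_nonneg (by linarith : (0:ℝ) ≤ P - 2) (by linarith : (0:ℝ) ≤ Q)]

set_option maxHeartbeats 1000000 in
/-- The recursion bound on the number of oracle calls: if `f(n,0) = 0`, `f(n,d) = 1` for
`1 ≤ n ≤ 3` and `d > 0`, and for `n ≥ 4`, `d ∈ {1,2,3}` there is `2 ≤ p ≤ ⌊n/2⌋` with
`f(n,d) ≤ (d+1)³ f(p,d) + d(d+1)² f(n-p,d-1) + f(n-p+1,d)`, then
`f(n,d) ≤ (d+1)^{3d} · n^{d + 3·log₂(d+1) + 2}` for all `n ≥ 1`, `d ≤ 3`. -/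
theorem oracle_calls_bound (f : ℕ → ℕ → ℝ)
    (h0 : ∀ n, 1 ≤ n → f n 0 = 0)
    (h1 : ∀ n d, 1 ≤ n → n ≤ 3 → 0 < d → f n d = 1)
    (hrec : ∀ n d, 4 ≤ n → (d = 1 ∨ d = 2 ∨ d = 3) →
      ∃ p, 2 ≤ p ∧ p ≤ n / 2 ∧
        f n d ≤ ((d : ℝ) + 1) ^ 3 * f p d + (d : ℝ) * ((d : ℝ) + 1) ^ 2 * f (n - p) (d - 1)
          + f (n - p + 1) d) :
    ∀ n d, 1 ≤ n → d ≤ 3 →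
      f n d ≤ ((d : ℝ) + 1) ^ (3 * d) *
        (n : ℝ) ^ ((d : ℝ) + 3 * Real.logb 2 ((d : ℝ) + 1) + 2) := by
  intro n
  induction n using Nat.strong_induction_on with
  | _ n ih =>
  intro d hn hd
  have hN1 : (1:ℝ) ≤ (n:ℝ) := by exact_mod_cast hn
  have hN0 : (0:ℝ) < (n:ℝ) := by linarith
  have hD0 : (0:ℝ) ≤ (d:ℝ) := Nat.cast_nonneg d
  have hLd : 0 ≤ Real.logb 2 ((d:ℝ) + 1) :=
    Real.logb_nonneg one_lt_two (by linarith)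
  have hE2 : (2:ℝ) ≤ (d:ℝ) + 3 * Real.logb 2 ((d:ℝ) + 1) + 2 := by linarith
  rcases Nat.eq_zero_or_pos d with hd0 | hdpos
  · subst hd0
    rw [h0 n hn]
    positivity
  rcases le_or_gt n 3 with hn3 | hn4
  · rw [h1 n d hn hn3 hdpos]
    have h1' : (1:ℝ) ≤ ((d:ℝ) + 1) ^ (3*d) := one_le_pow₀ (by linarith)
    have h2' : (1:ℝ) ≤ (n:ℝ) ^ ((d:ℝ) + 3 * Real.logb 2 ((d:ℝ)+1) + 2) := by
      have := Real.rpow_le_rpow_of_exponent_le hN1 (show (0:ℝ) ≤ (d:ℝ) + 3 * Real.logb 2 ((d:ℝ)+1) + 2 by linarith)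
      simpa using this
    nlinarith
  -- main recursive case
  have hd13 : d = 1 ∨ d = 2 ∨ d = 3 := by omega
  obtain ⟨p, hp2, hpn, hfle⟩ := hrec n d (by omega) hd13
  have hq2 : 2 ≤ n - p := by omega
  have hpltn : p < n := by omega
  set D := (d:ℝ) with hDdef
  set N := (n:ℝ) with hNdef
  set P := (p:ℝ) with hPdef
  have hD1 : (1:ℝ) ≤ D := by rw [hDdef]; exact_mod_cast hdpos
  have hQcast : ((n - p : ℕ) : ℝ) = N - P := by
    push_cast [Nat.cast_sub hpltn.le]; ring
  have hRcast : ((n - p + 1 : ℕ) : ℝ) = N - P + 1 := by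
    push_cast [Nat.cast_sub hpltn.le]; ring
  have hdcast : ((d - 1 : ℕ) : ℝ) = D - 1 := by
    push_cast [Nat.cast_sub hdpos]; ring
  set Q : ℝ := N - P with hQdef
  have hP2 : (2:ℝ) ≤ P := by rw [hPdef]; exact_mod_cast hp2
  have hQ2 : (2:ℝ) ≤ Q := by rw [← hQcast]; exact_mod_cast hq2
  have hN4 : (4:ℝ) ≤ N := by rw [hNdef]; exact_mod_cast hn4
  have hPhalf : P ≤ N / 2 := by
    calc P ≤ ((n / 2 : ℕ) : ℝ) := by rw [hPdef]; exact_mod_cast hpn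
    _ ≤ N / 2 := by exact_mod_cast Nat.cast_div_le
  -- induction hypotheses
  have hA := ih p hpltn d (by omega) hd
  have hB := ih (n - p) (by omega) (d - 1) (by omega) (by omega)
  have hC := ih (n - p + 1) (by omega) d (by omega) hd
  rw [hQcast] at hB
  rw [hRcast] at hC
  rw [hdcast] at hB
  rw [← hDdef] at hA hC
  rw [← hPdef] at hA
  have hDm1 : D - 1 + 1 = D := by ring
  rw [hDm1] at hB
  set L := Real.logb 2 (D + 1) with hLdef
  set e : ℝ := D + 3 * L + 2 with hedef
  -- hB : f (n-p) (d-1) ≤ D ^ (3*(d-1)) * (N-P) ^ ((D-1) + 3 * logb 2 D + 2)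
  set e' : ℝ := (D - 1) + 3 * Real.logb 2 D + 2 with he'def
  clear_value D N P Q L e e'
  have hLD : 0 ≤ Real.logb 2 D := Real.logb_nonneg one_lt_two hD1
  have hNe : (0:ℝ) < N ^ e := Real.rpow_pos_of_pos hN0 _
  have hpow_pos : (0:ℝ) < (D + 1) ^ (3*d) := by positivity
  -- Term 1
  have hT1 : (D + 1) ^ 3 * f p d ≤ (D + 1) ^ (3*d) * ((P/N)^2 * N ^ e) := by
    have hx0 : 0 < P / N := by positivity
    have hx2 : P / N ≤ 1/2 := by
      rw [div_le_div_iff₀ hN0 (by norm_num)]; linarith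
    have hkey := key1 (c := D + 1) (x := P/N) (D := D) (by linarith) hx0 hx2 (by linarith)
    rw [← hLdef, ← hedef] at hkey
    have hPsplit : P ^ e = (P/N) ^ e * N ^ e := by
      rw [← Real.mul_rpow (by positivity) (by positivity), div_mul_cancel₀ _ (ne_of_gt hN0)]
    calc (D + 1) ^ 3 * f p d ≤ (D + 1) ^ 3 * ((D + 1) ^ (3*d) * P ^ e) := by
          have h3 : (0:ℝ) ≤ (D+1)^3 := by positivity
          exact mul_le_mul_of_nonneg_left hA h3
    _ = (D + 1) ^ (3*d) * (((D + 1) ^ 3 * (P/N) ^ e) * N ^ e) := by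
          rw [hPsplit]; ring
    _ ≤ (D + 1) ^ (3*d) * ((P/N)^2 * N ^ e) := by
          apply mul_le_mul_of_nonneg_left _ (le_of_lt hpow_pos)
          exact mul_le_mul_of_nonneg_right hkey (le_of_lt hNe)
  -- Term 2
  have hT2 : D * (D + 1) ^ 2 * f (n - p) (d - 1) ≤ (D + 1) ^ (3*d) * (Q/N^2 * N ^ e) := by
    have hQ0 : (0:ℝ) < Q := by linarith
    have hQN : Q ≤ N := by rw [hQdef]; linarith
    have hQe' : Q ^ e' ≤ Q * N ^ (e - 2) := by
      have h1 : Q ^ e' = Q * Q ^ (e' - 1) := by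
        nth_rewrite 1 [show e' = 1 + (e' - 1) by ring]
        rw [Real.rpow_add hQ0, Real.rpow_one]
      have h2 : Q ^ (e' - 1) ≤ N ^ (e' - 1) := by
        apply Real.rpow_le_rpow hQ0.le hQN
        rw [he'def]; linarith
      have h3 : N ^ (e' - 1) ≤ N ^ (e - 2) := by
        apply Real.rpow_le_rpow_of_exponent_le hN1
        have : Real.logb 2 D ≤ Real.logb 2 (D + 1) :=
          Real.logb_le_logb_of_le one_lt_two (by linarith) (by linarith)
        rw [he'def, hedef]; linarith
      calc Q ^ e' = Q * Q ^ (e' - 1) := h1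
      _ ≤ Q * N ^ (e - 2) := by
          have := h2.trans h3
          exact mul_le_mul_of_nonneg_left this hQ0.le
    have hscal : D * (D + 1) ^ 2 * D ^ (3*(d-1)) ≤ (D + 1) ^ (3*d) := by
      rcases hd13 with h | h | h <;> subst h <;> rw [hDdef] <;> norm_num
    have hNsplit : N ^ (e - 2) * N ^ 2 = N ^ e := by
      rw [← Real.rpow_natCast N 2, ← Real.rpow_add hN0]
      norm_num
    calc D * (D + 1) ^ 2 * f (n - p) (d - 1)
        ≤ D * (D + 1) ^ 2 * (D ^ (3*(d-1)) * Q ^ e') := by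
          apply mul_le_mul_of_nonneg_left hB (by positivity)
    _ ≤ D * (D + 1) ^ 2 * (D ^ (3*(d-1)) * (Q * N ^ (e - 2))) := by
          apply mul_le_mul_of_nonneg_left _ (by positivity)
          exact mul_le_mul_of_nonneg_left hQe' (by positivity)
    _ = (D * (D + 1) ^ 2 * D ^ (3*(d-1))) * (Q * N ^ (e - 2)) := by ring
    _ ≤ (D + 1) ^ (3*d) * (Q * N ^ (e - 2)) := by
          apply mul_le_mul_of_nonneg_right hscal
          have : (0:ℝ) ≤ N ^ (e-2) := Real.rpow_nonneg hN0.le _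
          positivity
    _ = (D + 1) ^ (3*d) * (Q/N^2 * N ^ e) := by
          rw [← hNsplit]; field_simp
  -- Term 3
  have hT3 : f (n - p + 1) d ≤ (D + 1) ^ (3*d) * (((Q+1)/N)^2 * N ^ e) := by
    have hR0 : (0:ℝ) < Q + 1 := by linarith
    have hRN : Q + 1 ≤ N := by rw [hQdef]; linarith
    have hRsplit : (Q + 1) ^ e = ((Q+1)/N) ^ e * N ^ e := by
      rw [← Real.mul_rpow (by positivity) (by positivity),
        div_mul_cancel₀ _ (ne_of_gt hN0)]
    have hx1 : (Q+1)/N ≤ 1 := by rw [div_le_one hN0]; linarith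
    have hexp : ((Q+1)/N) ^ e ≤ ((Q+1)/N) ^ 2 := by
      have := Real.rpow_le_rpow_of_exponent_ge (by positivity : (0:ℝ) < (Q+1)/N) hx1 hE2
      rwa [show ((2:ℝ)) = ((2:ℕ):ℝ) by norm_num, Real.rpow_natCast] at this
    calc f (n - p + 1) d ≤ (D + 1) ^ (3*d) * (Q + 1) ^ e := hC
    _ = (D + 1) ^ (3*d) * (((Q+1)/N) ^ e * N ^ e) := by rw [hRsplit]
    _ ≤ (D + 1) ^ (3*d) * (((Q+1)/N)^2 * N ^ e) := by
          apply mul_le_mul_of_nonneg_left _ (le_of_lt hpow_pos)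
          exact mul_le_mul_of_nonneg_right hexp (le_of_lt hNe)
  -- sum
  have hsum : (P/N)^2 + Q/N^2 + ((Q+1)/N)^2 ≤ 1 := by
    have hNP : N = P + Q := by rw [hQdef]; ring
    have hnum : P^2 + Q + (Q+1)^2 ≤ N^2 := by
      rw [hNP]; exact sum_sq_lemma hP2 hQ2
    have heq : (P/N)^2 + Q/N^2 + ((Q+1)/N)^2 = (P^2 + Q + (Q+1)^2)/N^2 := by
      field_simp
    rw [heq, div_le_one (by positivity)]
    exact hnum
  calc f n d ≤ (D + 1) ^ 3 * f p d + D * (D + 1) ^ 2 * f (n - p) (d - 1) + f (n - p + 1) d := hfle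
  _ ≤ (D + 1) ^ (3*d) * ((P/N)^2 * N ^ e) + (D + 1) ^ (3*d) * (Q/N^2 * N ^ e)
      + (D + 1) ^ (3*d) * (((Q+1)/N)^2 * N ^ e) := by
        exact add_le_add (add_le_add hT1 hT2) hT3
  _ = (D + 1) ^ (3*d) * ((P/N)^2 + Q/N^2 + ((Q+1)/N)^2) * N ^ e := by ring
  _ ≤ (D + 1) ^ (3*d) * 1 * N ^ e := by
        apply mul_le_mul_of_nonneg_right _ (le_of_lt hNe)
        exact mul_le_mul_of_nonneg_left hsum (le_of_lt hpow_pos)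
  _ = (D + 1) ^ (3*d) * N ^ e := by ring
end

section
/- Let G be a finite abelian group and suppose for each pair (α,β) in a set Π̂ ⊆ ℤ², π(α,β) ⊆ G is non-empty, and the following averaging property holds: for v ∈ D and (α,β) with (α,β), (α,β)+2v ∈ Π̂, for every r₁ ∈ π(α,β) and r₂ ∈ π((α,β)+2v), there exist r₃, r₄ ∈ π((α,β)+v) with r₁ + r₂ = r₃ + r₄. If |π(α,β)| ≥ d+1 for some d ∈ {1,2,3} and (α,β)+2v ∈ Π̂, then |π((α,β)+v)| ≥ d. -/
/-- Under the averaging property, if `|π(α,β)| ≥ d+1` for `d ∈ {1,2,3}` and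
`(α,β) + 2v ∈ Π̂`, then `|π((α,β)+v)| ≥ d`. -/
theorem pattern_propagation {G : Type*} [AddCommGroup G] [Fintype G]
    (P : Set (ℤ × ℤ)) (D : Set (ℤ × ℤ)) (π : ℤ × ℤ → Finset G)
    (hne : ∀ p ∈ P, (π p).Nonempty)
    (havg : ∀ v ∈ D, ∀ p ∈ P, p + 2 • v ∈ P →
      ∀ r₁ ∈ π p, ∀ r₂ ∈ π (p + 2 • v),
        ∃ r₃ ∈ π (p + v), ∃ r₄ ∈ π (p + v), r₁ + r₂ = r₃ + r₄)
    (d : ℕ) (hd : d = 1 ∨ d = 2 ∨ d = 3)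
    (p : ℤ × ℤ) (hp : p ∈ P) (v : ℤ × ℤ) (hv : v ∈ D)
    (hcard : d + 1 ≤ (π p).card) (h2v : p + 2 • v ∈ P) :
    d ≤ (π (p + v)).card := by
  classical
  by_contra hlt
  push_neg at hlt
  obtain ⟨r₂, hr₂⟩ := hne _ h2v
  have hT : d + 1 ≤ ((π p).image (· + r₂)).card := by
    rw [Finset.card_image_of_injOn (fun a _ b _ h => by simpa using h)]
    exact hcard
  have hsub : (π p).image (· + r₂) ⊆
      (π (p + v)).sym2.image (Sym2.lift ⟨(· + ·), add_comm⟩) := by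
    intro x hx
    simp only [Finset.mem_image] at hx
    obtain ⟨r₁, hr₁, rfl⟩ := hx
    obtain ⟨r₃, h3, r₄, h4, heq⟩ := havg v hv p hp h2v r₁ hr₁ r₂ hr₂
    refine Finset.mem_image.2 ⟨s(r₃, r₄), ?_, ?_⟩
    · rw [Finset.mk_mem_sym2_iff]; exact ⟨h3, h4⟩
    · simpa using heq.symm
  have hle := ((hT.trans (Finset.card_le_card hsub)).trans Finset.card_image_le)
  rw [Finset.card_sym2] at hle
  generalize hn : (π (p + v)).card = n at hle hlt
  rcases hd with rfl | rfl | rfl <;> interval_cases n <;> norm_num [Nat.choose] at hle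
end
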